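/- The Ewens sampling probabilities sum to one: for every $n \geq 1$ and $\alpha > 0$, $\sum_{v \in \Delta_n} \frac{n!}{\alpha(\alpha+1)\cdots(\alpha+n-1)} \prod_{j=1}^n \frac{\alpha^{v_j}}{j^{v_j} v_j!} = 1$, where $\Delta_n = \{v \in \mathbb{N}^n : \sum_{j=1}^n j v_j = n\}$. Equivalently, $\sum_{v \in \Delta_n} \prod_{j=1}^n \frac{(\alpha/j)^{v_j}}{v_j!} = \frac{\alpha(\alpha+1)\cdots(\alpha+n-1)}{n!}$. -/

import Mathlib

open Finset

private def Dset (n m : ℕ) : Finset (Fin n → ℕ) :=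
  (Fintype.piFinset fun _ => Finset.range (m+1)).filter
    (fun v => ∑ j : Fin n, ((j : ℕ) + 1) * v j = m)

private lemma mem_Dset {n m : ℕ} {v : Fin n → ℕ} :
    v ∈ Dset n m ↔ ∑ j : Fin n, ((j : ℕ) + 1) * v j = m := by
  simp only [Dset, mem_filter, Fintype.mem_piFinset, mem_range, and_iff_right_iff_imp]
  intro h j
  have h1 : ((j : ℕ) + 1) * v j ≤ m :=
    h ▸ Finset.single_le_sum (f := fun j : Fin n => ((j : ℕ) + 1) * v j)
      (fun _ _ => Nat.zero_le _) (mem_univ j)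
  have h2 : v j ≤ ((j : ℕ) + 1) * v j := Nat.le_mul_of_pos_left _ (Nat.succ_pos _)
  exact Nat.lt_succ_of_le (h2.trans h1)

private noncomputable def Sfun (n : ℕ) (α : ℝ) (m : ℕ) : ℝ :=
  ∑ v ∈ Dset n m, ∏ j : Fin n, (α / ((j : ℕ) + 1)) ^ (v j) / ((v j).factorial : ℝ)

private lemma Sfun_zero (n : ℕ) (α : ℝ) : Sfun n α 0 = 1 := by
  have hD : Dset n 0 = {fun _ => 0} := by
    ext v
    simp only [mem_Dset, Finset.mem_singleton]
    constructor
    · intro h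
      funext j
      have := (Finset.sum_eq_zero_iff (s := (univ : Finset (Fin n)))).1 h j (mem_univ j)
      simpa using this
    · rintro rfl; simp
  simp [Sfun, hD]

private lemma sum_update (n : ℕ) (v : Fin n → ℕ) (j : Fin n) (a : ℕ) :
    ∑ i : Fin n, ((i : ℕ) + 1) * (Function.update v j a i)
      = ((j : ℕ) + 1) * a + ∑ i ∈ univ.erase j, ((i : ℕ) + 1) * v i := by
  rw [← Finset.add_sum_erase _ _ (mem_univ j), Function.update_self]
  congr 1
  exact Finset.sum_congr rfl fun i hi => by
    rw [Function.update_of_ne (Finset.ne_of_mem_erase hi)]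

private lemma prod_update (n : ℕ) (f : Fin n → ℕ → ℝ) (v : Fin n → ℕ) (j : Fin n) (a : ℕ) :
    ∏ i : Fin n, f i (Function.update v j a i)
      = f j a * ∏ i ∈ univ.erase j, f i (v i) := by
  rw [← Finset.mul_prod_erase _ _ (mem_univ j), Function.update_self]
  congr 1
  exact Finset.prod_congr rfl fun i hi => by
    rw [Function.update_of_ne (Finset.ne_of_mem_erase hi)]

private lemma ewensInnerSum (n m : ℕ) (α : ℝ) (j : Fin n) (hj : (j : ℕ) + 1 ≤ m) :
    ∑ v ∈ Dset n m,
        (((((j : ℕ) + 1) * v j : ℕ) : ℝ) *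
          ∏ i : Fin n, (α / ((i : ℕ) + 1)) ^ (v i) / ((v i).factorial : ℝ))
      = α * Sfun n α (m - ((j : ℕ) + 1)) := by
  rw [Sfun, Finset.mul_sum]
  rw [← Finset.sum_filter_of_ne (p := fun v : Fin n → ℕ => v j ≠ 0)
    (fun v _ h => by
      intro hvj
      apply h
      simp [hvj])]
  refine Finset.sum_nbij' (fun v => Function.update v j (v j - 1))
    (fun w => Function.update w j (w j + 1)) ?_ ?_ ?_ ?_ ?_
  · intro v hv
    simp only [mem_filter, mem_Dset] at hv
    rw [mem_Dset, sum_update]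
    obtain ⟨hsum, hne⟩ := hv
    rw [← Finset.add_sum_erase _ _ (mem_univ j)] at hsum
    have hv1 : 1 ≤ v j := Nat.pos_of_ne_zero hne
    have hm : ((j : ℕ) + 1) * v j = ((j : ℕ) + 1) * (v j - 1) + ((j : ℕ) + 1) := by
      conv_lhs => rw [← Nat.succ_pred_eq_of_pos hv1]
      rw [Nat.succ_eq_add_one, Nat.mul_add, Nat.mul_one, Nat.pred_eq_sub_one]
    omega
  · intro w hw
    rw [mem_Dset] at hw
    simp only [mem_filter, mem_Dset, sum_update]
    constructor
    · rw [← Finset.add_sum_erase _ (fun i : Fin n => ((i:ℕ)+1) * w i) (mem_univ j)] at hw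
      have hm : ((j : ℕ) + 1) * (w j + 1) = ((j : ℕ) + 1) * w j + ((j : ℕ) + 1) := by
        rw [Nat.mul_add, Nat.mul_one]
      omega
    · simp
  · intro v hv
    simp only [mem_filter] at hv
    funext i
    rcases eq_or_ne i j with rfl | h
    · simp only [Function.update_self]
      omega
    · simp [Function.update_of_ne h]
  · intro w hw
    funext i
    rcases eq_or_ne i j with rfl | h
    · simp
    · simp [Function.update_of_ne h]
  · intro v hv
    simp only [mem_filter, mem_Dset] at hv
    obtain ⟨hsum, hne⟩ := hv
    rw [prod_update n (fun i k => (α / ((i : ℕ) + 1)) ^ k / (k.factorial : ℝ)) v j (v j - 1),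
      ← Finset.mul_prod_erase _ _ (mem_univ j), ← mul_assoc, ← mul_assoc]
    congr 1
    obtain ⟨k, hk⟩ : ∃ k, v j = k + 1 := ⟨v j - 1, by omega⟩
    rw [hk]
    simp only [Nat.add_sub_cancel, Nat.factorial_succ, pow_succ]
    push_cast
    have h1 : ((j : ℝ) + 1) ≠ 0 := by positivity
    have h2 : ((k : ℝ) + 1) ≠ 0 := by positivity
    have h3 : ((k.factorial : ℝ)) ≠ 0 := Nat.cast_ne_zero.2 k.factorial_ne_zero
    field_simp

private lemma Sfun_rec (n m : ℕ) (α : ℝ) (h1 : 1 ≤ m) (h2 : m ≤ n) :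
    (m : ℝ) * Sfun n α m = α * ∑ k ∈ range m, Sfun n α k := by
  rw [Sfun, Finset.mul_sum]
  have step1 : ∀ v ∈ Dset n m,
      (m : ℝ) * ∏ i : Fin n, (α / ((i : ℕ) + 1)) ^ (v i) / ((v i).factorial : ℝ)
        = ∑ j : Fin n, (((((j : ℕ) + 1) * v j : ℕ) : ℝ) *
            ∏ i : Fin n, (α / ((i : ℕ) + 1)) ^ (v i) / ((v i).factorial : ℝ)) := by
    intro v hv
    rw [mem_Dset] at hv
    rw [← Finset.sum_mul]
    congr 1
    rw [← hv]
    push_cast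
    rfl
  rw [Finset.sum_congr rfl step1, Finset.sum_comm]
  have step2 : ∀ j : Fin n,
      (∑ v ∈ Dset n m, (((((j : ℕ) + 1) * v j : ℕ) : ℝ) *
          ∏ i : Fin n, (α / ((i : ℕ) + 1)) ^ (v i) / ((v i).factorial : ℝ)))
        = if (j : ℕ) + 1 ≤ m then α * Sfun n α (m - ((j : ℕ) + 1)) else 0 := by
    intro j
    split_ifs with hj
    · exact ewensInnerSum n m α j hj
    · refine Finset.sum_eq_zero fun v hv => ?_
      rw [mem_Dset] at hv
      have : ((j : ℕ) + 1) * v j ≤ m :=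
        hv ▸ Finset.single_le_sum (f := fun i : Fin n => ((i : ℕ) + 1) * v i)
          (fun _ _ => Nat.zero_le _) (mem_univ j)
      have hvj : v j = 0 := by nlinarith
      simp [hvj]
  rw [Finset.sum_congr rfl (fun j _ => step2 j)]
  have : ∑ j : Fin n, (if (j : ℕ) + 1 ≤ m then α * Sfun n α (m - ((j : ℕ) + 1)) else 0)
      = ∑ j ∈ range n, (if j + 1 ≤ m then α * Sfun n α (m - (j + 1)) else 0) :=
    Fin.sum_univ_eq_sum_range (fun j => if j + 1 ≤ m then α * Sfun n α (m - (j + 1)) else 0) n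
  rw [this, ← Finset.sum_subset (Finset.range_subset_range.2 h2)
    (fun x _ hx => by
      rw [if_neg]
      simp only [mem_range, not_lt] at hx
      omega)]
  have : ∑ j ∈ range m, (if j + 1 ≤ m then α * Sfun n α (m - (j + 1)) else 0)
      = ∑ j ∈ range m, α * Sfun n α (m - (j + 1)) := by
    refine Finset.sum_congr rfl fun j hj => ?_
    rw [if_pos]
    simp only [mem_range] at hj
    omega
  rw [this, ← Finset.mul_sum]
  congr 1
  have := Finset.sum_range_reflect (fun k => Sfun n α k) m
  rw [← this]
  refine Finset.sum_congr rfl fun j hj => ?_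
  simp only [mem_range] at hj
  congr 1
  omega

private lemma pochhammer_sum (α : ℝ) (m : ℕ) :
    α * ∑ k ∈ range m, (∏ i ∈ range k, (α + i)) / (k.factorial : ℝ)
      = m * ((∏ i ∈ range m, (α + i)) / (m.factorial : ℝ)) := by
  induction m with
  | zero => simp
  | succ m ih =>
    rw [Finset.sum_range_succ, mul_add, ih, Finset.prod_range_succ, Nat.factorial_succ]
    have h1 : ((m.factorial : ℝ)) ≠ 0 := Nat.cast_ne_zero.2 m.factorial_ne_zero
    have h2 : ((m : ℝ) + 1) ≠ 0 := by positivity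
    push_cast
    field_simp
    ring

private lemma Sfun_eq (n : ℕ) (α : ℝ) : ∀ m, m ≤ n →
    Sfun n α m = (∏ i ∈ range m, (α + i)) / (m.factorial : ℝ) := by
  intro m
  induction m using Nat.strong_induction_on with
  | _ m ih =>
    intro hm
    rcases Nat.eq_zero_or_pos m with rfl | hpos
    · simp [Sfun_zero]
    · have hrec := Sfun_rec n m α hpos hm
      have hsum : ∑ k ∈ range m, Sfun n α k
          = ∑ k ∈ range m, (∏ i ∈ range k, (α + i)) / (k.factorial : ℝ) :=
        Finset.sum_congr rfl fun k hk => by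
          simp only [mem_range] at hk
          exact ih k hk (le_trans hk.le hm)
      rw [hsum, pochhammer_sum] at hrec
      have hm0 : (m : ℝ) ≠ 0 := Nat.cast_ne_zero.2 hpos.ne'
      exact mul_left_cancel₀ hm0 hrec

/-- the Ewens sampling probabilities sum to one; equivalently
`∑_{v ∈ Δ_n} ∏_{j=1}^n (α/j)^{v_j}/v_j! = α(α+1)⋯(α+n-1)/n!`, where
`Δ_n = {v ∈ ℕ^n : ∑ j·v_j = n}` (indices `j = 1,…,n` encoded as `j.val + 1`). -/
theorem ewens_sum_to_one (n : ℕ) (hn : 1 ≤ n) (α : ℝ) (hα : 0 < α) :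
    ∑' v : {v : Fin n → ℕ // ∑ j : Fin n, ((j : ℕ) + 1) * v j = n},
        ∏ j : Fin n, (α / ((j : ℕ) + 1)) ^ (v.1 j) / ((v.1 j).factorial : ℝ)
      = (∏ i ∈ Finset.range n, (α + i)) / (n.factorial : ℝ) := by
  have he : ∑' v : {v : Fin n → ℕ // ∑ j : Fin n, ((j : ℕ) + 1) * v j = n},
        ∏ j : Fin n, (α / ((j : ℕ) + 1)) ^ (v.1 j) / ((v.1 j).factorial : ℝ)
      = ∑' v : {v : Fin n → ℕ // v ∈ Dset n n},
        ∏ j : Fin n, (α / ((j : ℕ) + 1)) ^ (v.1 j) / ((v.1 j).factorial : ℝ) := by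
    exact Equiv.tsum_eq
      ((Equiv.subtypeEquivRight (fun v => mem_Dset.symm)) :
        {v : Fin n → ℕ // ∑ j : Fin n, ((j : ℕ) + 1) * v j = n}
          ≃ {v : Fin n → ℕ // v ∈ Dset n n})
      fun v : {v : Fin n → ℕ // v ∈ Dset n n} =>
        ∏ j : Fin n, (α / ((j : ℕ) + 1)) ^ (v.1 j) / ((v.1 j).factorial : ℝ)
  rw [he, Finset.tsum_subtype (Dset n n)
    (fun v => ∏ j : Fin n, (α / ((j : ℕ) + 1)) ^ (v j) / ((v j).factorial : ℝ))]
  exact Sfun_eq n α n le_rfl
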